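/- The Helfrich stored energy function W(ψ) = (k_c/2 (2H(ψ)+c₀)² + k̄ K(ψ) + λ)√(a(ψ)), with k_c > 0, k̄, c₀, λ ∈ ℝ, is polyconvex in the sense that there exists a convex function 𝕎 on the convex set N := {(a,b,c) ∈ ℝ³ : a - |b| > 0, a - 2|b| + c > 0} such that W(ψ) = 𝕎(√(a(ψ)), εH(ψ)√(a(ψ)), ε²K(ψ)√(a(ψ))). Explicitly, the function 𝕎(a,b,c) := (k_c/2)(2b/ε + c₀ a)²/a + (k̄/ε²) c + λ a is convex on {(a,b,c) ∈ ℝ³ : a > 0}. -/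

import Mathlib

lemma stmt11_key (x y u v a b : ℝ) (hx : 0 < x) (hy : 0 < y) (ha : 0 ≤ a) (hb : 0 ≤ b)
    (hab : a + b = 1) :
    (a*u + b*v)^2 / (a*x + b*y) ≤ a * (u^2/x) + b * (v^2/y) := by
  have hs : 0 < a*x + b*y := by
    rcases eq_or_lt_of_le ha with h | h
    · have hb1 : b = 1 := by linarith
      simp [← h, hb1, hy]
    · nlinarith [mul_nonneg hb hy.le, mul_pos h hx]
  rw [div_le_iff₀ hs]
  have h1 : a * (u^2/x) + b * (v^2/y) = (a*u^2*y + b*v^2*x)/(x*y) := by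
    field_simp
  rw [h1, div_mul_eq_mul_div, le_div_iff₀ (mul_pos hx hy)]
  nlinarith [sq_nonneg (u*y - v*x), mul_nonneg (mul_nonneg ha hb) (sq_nonneg (u*y - v*x)), mul_pos hx hy, sq_nonneg (a*u+b*v)]

/-- The Helfrich stored energy function
`W(ψ) = (k_c/2 (2H+c₀)² + k̄ K + λ)√a` is polyconvex: the explicit function
`𝕎(a,b,c) := (k_c/2)(2b/ε + c₀ a)²/a + (k̄/ε²) c + λ a` is convex on `{a > 0}` (which
contains the set `N`), and `W = 𝕎(√a, εH√a, ε²K√a)`. -/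
theorem stmt11 (kc kbar c₀ lam ε : ℝ) (hkc : 0 < kc) (hε : 0 < ε) :
    ∃ W : ℝ × ℝ × ℝ → ℝ,
      (∀ p : ℝ × ℝ × ℝ,
        W p = kc / 2 * (2 * p.2.1 / ε + c₀ * p.1) ^ 2 / p.1 + kbar / ε ^ 2 * p.2.2 + lam * p.1) ∧
      ConvexOn ℝ {p : ℝ × ℝ × ℝ | 0 < p.1} W ∧
      ∀ sa H K : ℝ, 0 < sa →
        (kc / 2 * (2 * H + c₀) ^ 2 + kbar * K + lam) * sa
          = W (sa, ε * H * sa, ε ^ 2 * K * sa) := by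
  refine ⟨fun p => kc / 2 * (2 * p.2.1 / ε + c₀ * p.1) ^ 2 / p.1 + kbar / ε ^ 2 * p.2.2
      + lam * p.1, fun p => rfl, ⟨?_, ?_⟩, ?_⟩
  · intro p hp q hq a b ha hb hab
    simp only [Set.mem_setOf_eq, Prod.fst_add, Prod.smul_fst, smul_eq_mul] at *
    rcases eq_or_lt_of_le ha with h | h
    · have hb1 : b = 1 := by linarith
      simpa [← h, hb1] using hq
    · nlinarith [mul_nonneg hb hq.le, mul_pos h hp]
  · intro p hp q hq a b ha hb hab
    simp only [Set.mem_setOf_eq, Prod.smul_mk, smul_eq_mul, Prod.mk_add_mk,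
      Prod.fst_add, Prod.snd_add, Prod.smul_fst, Prod.smul_snd] at *
    have key' := stmt11_key p.1 q.1 (2 * p.2.1 / ε + c₀ * p.1) (2 * q.2.1 / ε + c₀ * q.1) a b hp hq ha hb hab
    have heq : 2 * (a * p.2.1 + b * q.2.1) / ε + c₀ * (a * p.1 + b * q.1)
        = a * (2 * p.2.1 / ε + c₀ * p.1) + b * (2 * q.2.1 / ε + c₀ * q.1) := by
      field_simp; ring
    have h2 := mul_le_mul_of_nonneg_left key' (by linarith : (0:ℝ) ≤ kc / 2)
    calc kc / 2 * (2 * (a * p.2.1 + b * q.2.1) / ε + c₀ * (a * p.1 + b * q.1)) ^ 2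
          / (a * p.1 + b * q.1) + kbar / ε ^ 2 * (a * p.2.2 + b * q.2.2)
          + lam * (a * p.1 + b * q.1)
        ≤ kc / 2 * (a * ((2 * p.2.1 / ε + c₀ * p.1)^2 / p.1)
            + b * ((2 * q.2.1 / ε + c₀ * q.1)^2 / q.1))
          + kbar / ε ^ 2 * (a * p.2.2 + b * q.2.2) + lam * (a * p.1 + b * q.1) := by
          rw [heq, mul_div_assoc]
          linarith
      _ = a * (kc / 2 * (2 * p.2.1 / ε + c₀ * p.1) ^ 2 / p.1 + kbar / ε ^ 2 * p.2.2
            + lam * p.1)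
          + b * (kc / 2 * (2 * q.2.1 / ε + c₀ * q.1) ^ 2 / q.1 + kbar / ε ^ 2 * q.2.2
            + lam * q.1) := by ring
  · intro sa H K hsa
    field_simp
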